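/- Let ι be a nonempty finite type and A : Matrix ι ι ℝ. Then for every n ≥ 1 the volume-factor coefficients satisfy the recursion 2n · d_n(A) = ∑_{k=1}^{n} (−1)^{k−1} · tr(A^k) · d_{n−k}(A). -/

import Mathlib

open Finset

namespace VolAux

def T (m n : ℕ) : Finset (Fin m → ℕ) :=
  (Finset.Nat.antidiagonalTuple m n).filter fun f => ∀ i, f i ≠ 0

lemma mem_T {m n : ℕ} {f : Fin m → ℕ} :
    f ∈ T m n ↔ (∑ i, f i = n) ∧ ∀ i, f i ≠ 0 := by
  simp [T, Finset.Nat.mem_antidiagonalTuple]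

noncomputable def E (g : ℕ → ℝ) (m n : ℕ) : ℝ := ∑ f ∈ T m n, ∏ i, g (f i)

lemma m_le_of_mem_T {m n : ℕ} {f : Fin m → ℕ} (hf : f ∈ T m n) : m ≤ n := by
  obtain ⟨hs, hp⟩ := mem_T.mp hf
  calc m = ∑ _i : Fin m, 1 := by simp
  _ ≤ ∑ i, f i := Finset.sum_le_sum fun i _ => Nat.one_le_iff_ne_zero.mpr (hp i)
  _ = n := hs

lemma E_zero_zero (g : ℕ → ℝ) : E g 0 0 = 1 := by
  have : T 0 0 = {(fun _ => 0 : Fin 0 → ℕ)} := by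
    ext f
    simp [mem_T, funext_iff]
  simp [E, this]

lemma E_eq_zero_of_lt (g : ℕ → ℝ) {m n : ℕ} (h : n < m) : E g m n = 0 := by
  have : T m n = ∅ := by
    ext f
    simp only [Finset.notMem_empty, iff_false]
    intro hf
    exact absurd (m_le_of_mem_T hf) (by omega)
  simp [E, this]

lemma E_zero_pos (g : ℕ → ℝ) {n : ℕ} (hn : 1 ≤ n) : E g 0 n = 0 := by
  have : T 0 n = ∅ := by
    ext f
    simp only [Finset.notMem_empty, iff_false]
    intro hf
    have := (mem_T.mp hf).1
    simp at this
    omega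
  simp [E, this]

/-- splitting off the first block -/
lemma sum_T_succ (m n : ℕ) (P : (Fin (m + 1) → ℕ) → ℝ) :
    ∑ f ∈ T (m + 1) n, P f
      = ∑ k ∈ Finset.Icc 1 n, ∑ f ∈ T m (n - k), P (Fin.cons k f) := by
  rw [Finset.sum_sigma']
  refine Finset.sum_bij' (fun f _ => (⟨f 0, Fin.tail f⟩ : Σ _k : ℕ, Fin m → ℕ))
    (fun p _ => Fin.cons p.1 p.2) ?_ ?_ ?_ ?_ ?_
  · intro f hf
    obtain ⟨hs, hp⟩ := mem_T.mp hf
    rw [Fin.sum_univ_succ] at hs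
    have h0 : 1 ≤ f 0 := Nat.one_le_iff_ne_zero.mpr (hp 0)
    have hts : ∑ i : Fin m, Fin.tail f i = n - f 0 := by
      simp only [Fin.tail]
      omega
    have hle : f 0 ≤ n := by omega
    refine Finset.mem_sigma.mpr ⟨Finset.mem_Icc.mpr ⟨h0, hle⟩, ?_⟩
    exact mem_T.mpr ⟨hts, fun i => hp i.succ⟩
  · intro p hp
    obtain ⟨hk, hf⟩ := Finset.mem_sigma.mp hp
    obtain ⟨hs, hpos⟩ := mem_T.mp hf
    have hk' := Finset.mem_Icc.mp hk
    refine mem_T.mpr ⟨?_, ?_⟩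
    · rw [Fin.sum_univ_succ]
      simp only [Fin.cons_zero, Fin.cons_succ]
      omega
    · intro i
      refine Fin.cases ?_ ?_ i
      · simp only [Fin.cons_zero]; omega
      · intro j; simpa using hpos j
  · intro f hf
    simp [Fin.cons_self_tail]
  · intro p hp
    refine Sigma.ext ?_ ?_ <;> simp
  · intro f hf
    rw [Fin.cons_self_tail]

/-- invariance under permutation of coordinates -/
lemma sum_T_perm (m n : ℕ) (σ : Equiv.Perm (Fin m)) (P : (Fin m → ℕ) → ℝ) :
    ∑ f ∈ T m n, P (f ∘ σ) = ∑ f ∈ T m n, P f := by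
  refine Finset.sum_bij' (fun f _ => f ∘ σ) (fun f _ => f ∘ σ.symm) ?_ ?_ ?_ ?_ ?_
  · intro f hf
    obtain ⟨hs, hp⟩ := mem_T.mp hf
    exact mem_T.mpr ⟨by simpa using (Equiv.sum_comp σ f).trans hs, fun i => hp (σ i)⟩
  · intro f hf
    obtain ⟨hs, hp⟩ := mem_T.mp hf
    exact mem_T.mpr ⟨by simpa using (Equiv.sum_comp σ.symm f).trans hs, fun i => hp (σ.symm i)⟩
  · intro f hf; funext i; simp
  · intro f hf; funext i; simp
  · intro f hf; rfl

lemma weighted_swap (g : ℕ → ℝ) (m n : ℕ) (j : Fin (m + 1)) :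
    ∑ f ∈ T (m + 1) n, (f j : ℝ) * ∏ i, g (f i)
      = ∑ f ∈ T (m + 1) n, (f 0 : ℝ) * ∏ i, g (f i) := by
  have := sum_T_perm (m + 1) n (Equiv.swap 0 j)
    (fun f => (f 0 : ℝ) * ∏ i, g (f i))
  rw [← this]
  refine Finset.sum_congr rfl fun f _ => ?_
  simp only [Function.comp_apply, Equiv.swap_apply_left]
  congr 1
  exact (Equiv.prod_comp (Equiv.swap 0 j) (fun i => g (f i))).symm

/-- the key recursion for `E` -/
lemma key (g : ℕ → ℝ) (m n : ℕ) :
    (n : ℝ) * E g (m + 1) n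
      = (m + 1) * ∑ k ∈ Finset.Icc 1 n, (k : ℝ) * g k * E g m (n - k) := by
  have h1 : (n : ℝ) * E g (m + 1) n
      = ∑ f ∈ T (m + 1) n, (∑ j : Fin (m + 1), (f j : ℝ)) * ∏ i, g (f i) := by
    rw [E, Finset.mul_sum]
    refine Finset.sum_congr rfl fun f hf => ?_
    obtain ⟨hs, _⟩ := mem_T.mp hf
    congr 1
    rw [← hs]
    push_cast
    rfl
  rw [h1]
  have h2 : ∑ f ∈ T (m + 1) n, (∑ j : Fin (m + 1), (f j : ℝ)) * ∏ i, g (f i)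
      = ∑ j : Fin (m + 1), ∑ f ∈ T (m + 1) n, (f j : ℝ) * ∏ i, g (f i) := by
    rw [Finset.sum_comm]
    exact Finset.sum_congr rfl fun f _ => by rw [Finset.sum_mul]
  rw [h2]
  have h3 : ∀ j : Fin (m + 1), ∑ f ∈ T (m + 1) n, (f j : ℝ) * ∏ i, g (f i)
      = ∑ f ∈ T (m + 1) n, (f 0 : ℝ) * ∏ i, g (f i) := fun j => weighted_swap g m n j
  rw [Finset.sum_congr rfl fun j _ => h3 j, Finset.sum_const, Finset.card_univ]
  simp only [Fintype.card_fin, nsmul_eq_mul]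
  push_cast
  congr 1
  rw [sum_T_succ m n (fun f => (f 0 : ℝ) * ∏ i, g (f i))]
  refine Finset.sum_congr rfl fun k hk => ?_
  rw [E, Finset.mul_sum]
  refine Finset.sum_congr rfl fun f _ => ?_
  rw [Fin.prod_univ_succ]
  simp only [Fin.cons_zero, Fin.cons_succ]
  ring

end VolAux

namespace VolAux

def toComp {n m : ℕ} (f : Fin m → ℕ) (hf : f ∈ T m n) : Composition n :=
  ⟨List.ofFn f,
    by
      intro x hx
      obtain ⟨i, rfl⟩ := List.mem_ofFn.mp hx
      exact Nat.pos_of_ne_zero ((mem_T.mp hf).2 i),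
    by rw [List.sum_ofFn]; exact (mem_T.mp hf).1⟩

lemma comp_sum (g : ℕ → ℝ) (n m : ℕ) :
    ∑ c ∈ Finset.univ.filter (fun c : Composition n => c.length = m),
      (∏ i : Fin c.length, g (c.blocksFun i)) = E g m n := by
  rw [E]
  have hlen : ∀ c : Composition n,
      c ∈ Finset.univ.filter (fun c : Composition n => c.length = m) → c.length = m := by
    intro c hc; simpa using hc
  refine Finset.sum_bij' (fun c hc => c.blocksFun ∘ Fin.cast (hlen c hc).symm)
    (fun f hf => toComp f hf) ?_ ?_ ?_ ?_ ?_
  · intro c hc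
    refine mem_T.mpr ⟨?_, ?_⟩
    · have h2 := Fintype.sum_equiv (finCongr (hlen c hc).symm)
        (fun i => (c.blocksFun ∘ Fin.cast (hlen c hc).symm) i) c.blocksFun (fun i => rfl)
      simpa using h2.trans c.sum_blocksFun
    · intro i
      exact Nat.one_le_iff_ne_zero.mp (c.one_le_blocksFun _)
  · intro f hf
    simp only [Finset.mem_filter, Finset.mem_univ, true_and]
    simp [toComp, Composition.length]
  · intro c hc
    apply Composition.ext
    simp only [toComp]
    apply List.ext_get
    · simp [hlen c hc, Composition.blocks_length]
    · intro i h1 h2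
      simp [List.get_ofFn, Composition.blocksFun]
  · intro f hf
    funext i
    simp [toComp, Composition.blocksFun, List.get_ofFn]
    rfl
  · intro c hc
    exact (Fintype.prod_equiv (finCongr (hlen c hc).symm)
      (fun i => g ((c.blocksFun ∘ Fin.cast (hlen c hc).symm) i))
      (fun i => g (c.blocksFun i)) (fun i => rfl)).symm

end VolAux

/-- The volume-factor coefficients `d_n(A)`: `d_0(A) = 1` and, for `n ≥ 1`,
`d_n(A) = (−1)^n ∑_{m=1}^{n} (1/m!) (−1/2)^m ∑_{k_1+⋯+k_m=n} ∏_i tr(A^{k_i})/k_i`,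
the inner sum running over ordered tuples of positive integers (compositions of `n`
of length `m`). -/
noncomputable def volCoeff {ι : Type*} [Fintype ι] [DecidableEq ι] (A : Matrix ι ι ℝ) : ℕ → ℝ
  | 0 => 1
  | (n + 1) =>
      (-1 : ℝ) ^ (n + 1) *
        ∑ m ∈ Finset.Icc 1 (n + 1),
          (1 / (Nat.factorial m : ℝ)) * (-(1 : ℝ) / 2) ^ m *
            ∑ c ∈ Finset.univ.filter (fun c : Composition (n + 1) => c.length = m),
              ∏ i : Fin c.length, ((A ^ c.blocksFun i).trace / (c.blocksFun i : ℝ))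


namespace VolAux

/-- the basic weights -/
noncomputable def gg {ι : Type*} [Fintype ι] [DecidableEq ι] (A : Matrix ι ι ℝ) (k : ℕ) : ℝ :=
  (A ^ k).trace / (k : ℝ)

lemma volCoeff_zero {ι : Type*} [Fintype ι] [DecidableEq ι] (A : Matrix ι ι ℝ) :
    volCoeff A 0 = 1 := rfl

lemma volCoeff_eq {ι : Type*} [Fintype ι] [DecidableEq ι] (A : Matrix ι ι ℝ) {n : ℕ}
    (hn : 1 ≤ n) :
    volCoeff A n = (-1 : ℝ) ^ n * ∑ m ∈ Finset.Icc 1 n,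
      (1 / (Nat.factorial m : ℝ)) * (-(1 : ℝ) / 2) ^ m * E (gg A) m n := by
  obtain ⟨n', rfl⟩ : ∃ n', n = n' + 1 := ⟨n - 1, by omega⟩
  rw [volCoeff]
  congr 1
  refine Finset.sum_congr rfl fun m _ => ?_
  congr 1
  exact comp_sum (gg A) (n' + 1) m

end VolAux

open VolAux

/-- **Recursion for the volume-factor coefficients (Theorem 1).**
For every `n ≥ 1`, `2n · d_n(A) = ∑_{k=1}^{n} (−1)^{k−1} tr(A^k) d_{n−k}(A)`. -/
theorem volCoeff_recursion {ι : Type*} [Fintype ι] [Nonempty ι] [DecidableEq ι]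
    (A : Matrix ι ι ℝ) (n : ℕ) (hn : 1 ≤ n) :
    2 * (n : ℝ) * volCoeff A n =
      ∑ k ∈ Finset.Icc 1 n, (-1 : ℝ) ^ (k - 1) * (A ^ k).trace * volCoeff A (n - k) := by
  have hS : ∀ k, 1 ≤ k → k ≤ n →
      ∑ i ∈ Finset.range n, (1 / (Nat.factorial i : ℝ)) * (-(1:ℝ)/2) ^ i * E (gg A) i (n - k)
        = (-1 : ℝ) ^ (n - k) * volCoeff A (n - k) := by
    intro k hk1 hk2
    rcases Nat.eq_or_lt_of_le hk2 with heq | hlt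
    · have h0 : n - k = 0 := by omega
      rw [h0]
      rw [Finset.sum_eq_single 0]
      · simp [E_zero_zero, volCoeff_zero]
      · intro i _ hne
        rw [E_eq_zero_of_lt _ (by omega : 0 < i), mul_zero]
      · intro h; exact absurd (Finset.mem_range.mpr (by omega)) h
    · have hj : 1 ≤ n - k := by omega
      rw [← Finset.sum_subset (fun x hx => Finset.mem_range.mpr
          (by have := Finset.mem_Icc.mp hx; omega) :
          Finset.Icc 1 (n - k) ⊆ Finset.range n) ?_]
      · rw [volCoeff_eq A hj, ← mul_assoc, ← pow_add,
          Even.neg_one_pow ⟨n - k, rfl⟩, one_mul]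
      · intro x hx hnx
        simp only [Finset.mem_range] at hx
        simp only [Finset.mem_Icc, not_and, not_le] at hnx
        rcases Nat.eq_zero_or_pos x with h0 | h1
        · rw [h0, E_zero_pos _ hj, mul_zero]
        · rw [E_eq_zero_of_lt _ (hnx h1), mul_zero]
  calc
    2 * (n : ℝ) * volCoeff A n
        = (-1:ℝ)^n * ∑ m ∈ Finset.Icc 1 n,
            (1 / (Nat.factorial m : ℝ)) * (-(1:ℝ)/2) ^ m * (2 * ((n:ℝ) * E (gg A) m n)) := by
          rw [volCoeff_eq A hn, mul_left_comm (2 * (n:ℝ)) ((-1:ℝ)^n)]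
          congr 1
          rw [Finset.mul_sum]
          exact Finset.sum_congr rfl fun m _ => by ring
    _ = (-1:ℝ)^n * ∑ i ∈ Finset.range n,
            (1 / (Nat.factorial (1+i) : ℝ)) * (-(1:ℝ)/2) ^ (1+i) *
              (2 * ((n:ℝ) * E (gg A) (1+i) n)) := by
          rw [← Finset.Ico_add_one_right_eq_Icc, Finset.sum_Ico_eq_sum_range]
          norm_num
    _ = (-1:ℝ)^n * ∑ i ∈ Finset.range n,
            (-((1 / (Nat.factorial i : ℝ)) * (-(1:ℝ)/2) ^ i) *
              ∑ k ∈ Finset.Icc 1 n, (A ^ k).trace * E (gg A) i (n - k)) := by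
          congr 1
          refine Finset.sum_congr rfl fun i _ => ?_
          rw [show 1 + i = i + 1 from Nat.add_comm 1 i, key (gg A) i n]
          have hsum : ∑ k ∈ Finset.Icc 1 n, (k:ℝ) * gg A k * E (gg A) i (n-k)
              = ∑ k ∈ Finset.Icc 1 n, (A ^ k).trace * E (gg A) i (n-k) := by
            refine Finset.sum_congr rfl fun k hk => ?_
            have hk1 : (1:ℕ) ≤ k := (Finset.mem_Icc.mp hk).1
            have hkne : (k:ℝ) ≠ 0 := Nat.cast_ne_zero.mpr (by omega)
            rw [gg]
            field_simp
          rw [hsum, Nat.factorial_succ]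
          have h1 : ((i:ℝ) + 1) ≠ 0 := by positivity
          have h2 : (Nat.factorial i : ℝ) ≠ 0 := Nat.cast_ne_zero.mpr (Nat.factorial_ne_zero i)
          push_cast
          field_simp
          ring
    _ = ∑ k ∈ Finset.Icc 1 n, (-1:ℝ)^(n+1) * (A ^ k).trace *
            ((-1:ℝ)^(n-k) * volCoeff A (n - k)) := by
          rw [Finset.mul_sum]
          have step : ∀ i ∈ Finset.range n,
              (-1:ℝ)^n * (-((1 / (Nat.factorial i : ℝ)) * (-(1:ℝ)/2) ^ i) *
                ∑ k ∈ Finset.Icc 1 n, (A ^ k).trace * E (gg A) i (n - k))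
              = ∑ k ∈ Finset.Icc 1 n, (-1:ℝ)^(n+1) *
                  ((1 / (Nat.factorial i : ℝ)) * (-(1:ℝ)/2) ^ i *
                    ((A ^ k).trace * E (gg A) i (n - k))) := by
            intro i _
            have hfac : ∀ (Gi S : ℝ), (-1:ℝ)^n * (-Gi * S) = ((-1:ℝ)^(n+1) * Gi) * S :=
              fun _ _ => by ring
            rw [hfac, Finset.mul_sum]
            exact Finset.sum_congr rfl fun k _ => by ring
          rw [Finset.sum_congr rfl step, Finset.sum_comm]
          refine Finset.sum_congr rfl fun k hk => ?_
          obtain ⟨hk1, hk2⟩ := Finset.mem_Icc.mp hk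
          have : ∑ i ∈ Finset.range n, (-1:ℝ)^(n+1) *
              ((1 / (Nat.factorial i : ℝ)) * (-(1:ℝ)/2) ^ i *
                ((A ^ k).trace * E (gg A) i (n - k)))
              = (-1:ℝ)^(n+1) * (A ^ k).trace *
                ∑ i ∈ Finset.range n, (1 / (Nat.factorial i : ℝ)) * (-(1:ℝ)/2) ^ i *
                  E (gg A) i (n - k) := by
            rw [Finset.mul_sum]
            exact Finset.sum_congr rfl fun i _ => by ring
          rw [this, hS k hk1 hk2]
    _ = ∑ k ∈ Finset.Icc 1 n, (-1 : ℝ) ^ (k - 1) * (A ^ k).trace * volCoeff A (n - k) := by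
          refine Finset.sum_congr rfl fun k hk => ?_
          obtain ⟨hk1, hk2⟩ := Finset.mem_Icc.mp hk
          have hsign : (-1:ℝ)^(n+1) * (-1:ℝ)^(n-k) = (-1:ℝ)^(k-1) := by
            rw [← pow_add, show (n+1)+(n-k) = (k-1)+2*(n+1-k) by omega, pow_add, pow_mul]
            norm_num
          calc (-1:ℝ)^(n+1) * (A ^ k).trace * ((-1:ℝ)^(n-k) * volCoeff A (n-k))
              = ((-1:ℝ)^(n+1) * (-1:ℝ)^(n-k)) * (A ^ k).trace * volCoeff A (n-k) := by ring
            _ = (-1:ℝ)^(k-1) * (A ^ k).trace * volCoeff A (n-k) := by rw [hsign]
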